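/- arXiv:1201.6681 — 6 statements merged into one kernel-verified Lean document; each statement's English description precedes it below -/
import Mathlib

section
/- Let Σ_W be an n×n real positive definite matrix, Σ_Ṽ an n×n real positive definite matrix, and μ > 1. Then there exists an n×n positive semidefinite matrix K such that, defining Σ_W̃ = (Σ_W⁻¹ + K)⁻¹ and Σ_{X*} = (μ−1)⁻¹·Σ_Ṽ − Σ_W̃, we have: (i) Σ_W̃ ⪯ (μ−1)⁻¹·Σ_Ṽ, and (ii) K·Σ_{X*} = Σ_{X*}·K = 0. -/
open Matrix

theorem stmt_3 (n : ℕ) (SW SV : Matrix (Fin n) (Fin n) ℝ)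
    (hW : SW.PosDef) (hV : SV.PosDef) (μ : ℝ) (hμ : 1 < μ) :
    ∃ K : Matrix (Fin n) (Fin n) ℝ, K.PosSemidef ∧
      ((μ - 1)⁻¹ • SV - (SW⁻¹ + K)⁻¹).PosSemidef ∧
      K * ((μ - 1)⁻¹ • SV - (SW⁻¹ + K)⁻¹) = 0 ∧
      ((μ - 1)⁻¹ • SV - (SW⁻¹ + K)⁻¹) * K = 0 := by
  have hc : (0:ℝ) < (μ - 1)⁻¹ := inv_pos.2 (by linarith)
  set S : Matrix (Fin n) (Fin n) ℝ := (μ - 1)⁻¹ • SV with hSdef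
  have hS : S.PosDef := by
    refine ⟨?_, fun x hx => ?_⟩
    · show Sᴴ = S
      rw [hSdef, conjTranspose_smul, hV.1.eq]
      simp
    · exact (hV.smul hc).2 hx
  -- square root of S
  set M : Matrix (Fin n) (Fin n) ℝ := (open scoped MatrixOrder in CFC.sqrt S) with hMdef
  have hMM : M * M = S := open scoped MatrixOrder in
    CFC.sqrt_mul_sqrt_self S (Matrix.nonneg_iff_posSemidef.mpr hS.posSemidef)
  have hMH : M.IsHermitian := open scoped MatrixOrder in
    (Matrix.nonneg_iff_posSemidef.mp (CFC.sqrt_nonneg S)).1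
  have hMd : IsUnit M.det := by
    have h2 : M.det * M.det = S.det := by rw [← det_mul, hMM]
    refine isUnit_iff_ne_zero.2 fun h0 => hS.det_pos.ne' ?_
    rw [← h2, h0, zero_mul]
  have hMl : M⁻¹ * M = 1 := nonsing_inv_mul M hMd
  have hMr : M * M⁻¹ = 1 := mul_nonsing_inv M hMd
  have hMiH : (M⁻¹).IsHermitian := hMH.inv
  -- B := M * SW⁻¹ * M
  set B : Matrix (Fin n) (Fin n) ℝ := M * SW⁻¹ * M with hBdef
  have hBH : B.IsHermitian := by
    show Bᴴ = B
    rw [hBdef, conjTranspose_mul, conjTranspose_mul, hMH.eq, hW.inv.1.eq, mul_assoc]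
  set U : Matrix (Fin n) (Fin n) ℝ := (hBH.eigenvectorUnitary : Matrix (Fin n) (Fin n) ℝ)
    with hUdef
  have hUr : U * star U = 1 := Matrix.mem_unitaryGroup_iff.mp (hBH.eigenvectorUnitary).2
  have hUl : star U * U = 1 := Matrix.mem_unitaryGroup_iff'.mp (hBH.eigenvectorUnitary).2
  set d : Fin n → ℝ := hBH.eigenvalues with hddef
  have hBspec : B = U * diagonal d * star U := by
    have := hBH.spectral_theorem
    simpa using this
  -- the conjugation operator
  set P : (Fin n → ℝ) → Matrix (Fin n) (Fin n) ℝ := fun f => U * diagonal f * star U with hPdef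
  have hPmul : ∀ f g, P f * P g = P (fun i => f i * g i) := by
    intro f g
    simp only [hPdef]
    rw [mul_assoc, mul_assoc, ← mul_assoc (star U), ← mul_assoc (star U), hUl, one_mul,
      ← mul_assoc, ← mul_assoc, mul_assoc U, diagonal_mul_diagonal]
  have hPone : P (fun _ => 1) = 1 := by
    simp only [hPdef]
    rw [show (diagonal (fun _ => (1:ℝ)) : Matrix (Fin n) (Fin n) ℝ) = 1 from diagonal_one,
      mul_one, hUr]
  have hPzero : P (fun _ => 0) = 0 := by
    simp only [hPdef]
    rw [show (diagonal (fun _ => (0:ℝ)) : Matrix (Fin n) (Fin n) ℝ) = 0 from diagonal_zero,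
      mul_zero, zero_mul]
  have hPadd : ∀ f g, P f + P g = P (fun i => f i + g i) := by
    intro f g
    simp only [hPdef]
    rw [← add_mul, ← mul_add, diagonal_add]
  have hPsub : ∀ f g, P f - P g = P (fun i => f i - g i) := by
    intro f g
    simp only [hPdef]
    rw [← sub_mul, ← mul_sub, diagonal_sub]
  have hPpsd : ∀ f : Fin n → ℝ, (∀ i, 0 ≤ f i) → (P f).PosSemidef := by
    intro f hf
    simpa only [hPdef, star_eq_conjTranspose] using
      (PosSemidef.mul_mul_conjTranspose_same (posSemidef_diagonal_iff.mpr hf) U)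
  -- the functions
  set e : Fin n → ℝ := fun i => max (1 - d i) 0 with hedef
  set g : Fin n → ℝ := fun i => (max (d i) 1)⁻¹ with hgdef
  set h : Fin n → ℝ := fun i => 1 - g i with hhdef
  have hm1 : ∀ i, (1:ℝ) ≤ max (d i) 1 := fun i => le_max_right _ _
  have hde : ∀ i, d i + e i = max (d i) 1 := by
    intro i
    rcases le_total (d i) 1 with hle | hle
    · show d i + max (1 - d i) 0 = max (d i) 1
      rw [max_eq_left (by linarith : (0:ℝ) ≤ 1 - d i), max_eq_right hle]
      ring
    · show d i + max (1 - d i) 0 = max (d i) 1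
      rw [max_eq_right (by linarith : 1 - d i ≤ (0:ℝ)), max_eq_left hle]
      ring
  have hdg : ∀ i, (d i + e i) * g i = 1 := by
    intro i
    rw [hde i, hgdef]
    exact mul_inv_cancel₀ (by linarith [hm1 i])
  have heh : ∀ i, e i * h i = 0 := by
    intro i
    rcases le_or_gt 1 (d i) with hle | hlt
    · simp [hedef, max_eq_right (by linarith : 1 - d i ≤ (0:ℝ))]
    · have : max (d i) 1 = 1 := max_eq_right hlt.le
      simp [hhdef, hgdef, this]
  -- K
  set K : Matrix (Fin n) (Fin n) ℝ := M⁻¹ * P e * M⁻¹ with hKdef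
  have hKpsd : K.PosSemidef := by
    simpa only [hKdef, hMiH.eq, star_eq_conjTranspose] using
      (PosSemidef.mul_mul_conjTranspose_same (hPpsd e fun i => le_max_right _ _) M⁻¹)
  -- SW⁻¹ + K
  have hWinv : SW⁻¹ = M⁻¹ * B * M⁻¹ := by
    rw [hBdef, ← mul_assoc, ← mul_assoc, hMl, one_mul, mul_assoc, hMr, mul_one]
  have hT : SW⁻¹ + K = M⁻¹ * P (fun i => d i + e i) * M⁻¹ := by
    rw [hWinv, hKdef, ← hPadd, hBspec]
    show M⁻¹ * P d * M⁻¹ + _ = _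
    rw [mul_add, add_mul]
  have hTinv : (SW⁻¹ + K)⁻¹ = M * P g * M := by
    apply inv_eq_right_inv
    rw [hT]
    simp only [mul_assoc]
    rw [← mul_assoc M⁻¹ M, hMl, one_mul, ← mul_assoc (P fun i => d i + e i) (P g), hPmul,
      show (fun i => (d i + e i) * g i) = fun _ => (1:ℝ) from funext hdg, hPone, one_mul, hMl]
  have hSP : S = M * P (fun _ => 1) * M := by rw [hPone, mul_one, hMM]
  have hdiff : S - (SW⁻¹ + K)⁻¹ = M * P h * M := by
    rw [hTinv, hSP, ← sub_mul, ← mul_sub, hPsub]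
  refine ⟨K, hKpsd, ?_, ?_, ?_⟩
  · rw [hdiff]
    have hg1 : ∀ i, 0 ≤ h i := fun i => by
      show (0:ℝ) ≤ 1 - g i
      have : g i ≤ 1 := inv_le_one_of_one_le₀ (hm1 i)
      linarith
    simpa only [hMH.eq, star_eq_conjTranspose] using
      (PosSemidef.mul_mul_conjTranspose_same (hPpsd h hg1) M)
  · rw [hdiff, hKdef]
    simp only [mul_assoc]
    rw [← mul_assoc M⁻¹ M, hMl, one_mul, ← mul_assoc (P e) (P h), hPmul,
      show (fun i => e i * h i) = fun _ => (0:ℝ) from funext heh, hPzero, zero_mul, mul_zero]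
  · rw [hdiff, hKdef]
    simp only [mul_assoc]
    rw [← mul_assoc M M⁻¹, hMr, one_mul, ← mul_assoc (P h) (P e), hPmul,
      show (fun i => h i * e i) = fun _ => (0:ℝ) from funext fun i => by
        rw [mul_comm]; exact heh i, hPzero, zero_mul, mul_zero]
end

section
/- Let Σ_W be an n×n positive definite matrix and K an n×n positive semidefinite matrix, and let Σ_{X*} be a positive semidefinite matrix with K·Σ_{X*} = Σ_{X*}·K = 0. Define Σ_W̃ = (Σ_W⁻¹ + K)⁻¹. Then (Σ_{X*} + Σ_W̃)⁻¹ = (Σ_{X*} + Σ_W)⁻¹ + K. -/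
open Matrix

theorem stmt_5 (n : ℕ) (SW K SXs : Matrix (Fin n) (Fin n) ℝ)
    (hW : SW.PosDef) (hK : K.PosSemidef) (hXs : SXs.PosSemidef)
    (hKX : K * SXs = 0) (hXK : SXs * K = 0) :
    (SXs + (SW⁻¹ + K)⁻¹)⁻¹ = (SXs + SW)⁻¹ + K := by
  have hA : (SW⁻¹ + K).PosDef := hW.inv.add_posSemidef hK
  have hB : (SXs + SW).PosDef := Matrix.PosDef.posSemidef_add hXs hW
  have hWdet : IsUnit SW.det := hW.det_pos.ne'.isUnit
  have hAdet : IsUnit (SW⁻¹ + K).det := hA.det_pos.ne'.isUnit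
  have hBdet : IsUnit (SXs + SW).det := hB.det_pos.ne'.isUnit
  apply inv_eq_right_inv
  have h1 : (SW⁻¹ + K) * SXs = SW⁻¹ * SXs := by
    rw [Matrix.add_mul, hKX, add_zero]
  have h2 : SW⁻¹ * SXs + 1 = SW⁻¹ * (SXs + SW) := by
    rw [Matrix.mul_add, Matrix.nonsing_inv_mul _ hWdet]
  have h3 : (SXs + SW) * K = SW * K := by
    rw [Matrix.add_mul, hXK, zero_add]
  have key : ((SW⁻¹ + K) * SXs + 1) * ((SXs + SW)⁻¹ + K) = SW⁻¹ + K := by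
    calc ((SW⁻¹ + K) * SXs + 1) * ((SXs + SW)⁻¹ + K)
        = SW⁻¹ * ((SXs + SW) * ((SXs + SW)⁻¹ + K)) := by
          rw [h1, h2, Matrix.mul_assoc]
      _ = SW⁻¹ * (1 + SW * K) := by
          rw [Matrix.mul_add, Matrix.mul_nonsing_inv _ hBdet, h3]
      _ = SW⁻¹ + K := by
          rw [Matrix.mul_add, Matrix.mul_one, ← Matrix.mul_assoc,
            Matrix.nonsing_inv_mul _ hWdet, Matrix.one_mul]
  have hfact : SXs + (SW⁻¹ + K)⁻¹ = (SW⁻¹ + K)⁻¹ * ((SW⁻¹ + K) * SXs + 1) := by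
    rw [Matrix.mul_add, ← Matrix.mul_assoc, Matrix.nonsing_inv_mul _ hAdet,
      Matrix.one_mul, Matrix.mul_one]
  rw [hfact, Matrix.mul_assoc, key, Matrix.nonsing_inv_mul _ hAdet]
end

section
/- Let Σ_{X*}, Σ_W̃, Σ_W be n×n real symmetric matrices with Σ_{X*} + Σ_W̃ and Σ_{X*} + Σ_W positive definite, and suppose (Σ_{X*} + Σ_W̃)⁻¹ = (Σ_{X*} + Σ_W)⁻¹ + K where K is a matrix satisfying K·Σ_{X*} = Σ_{X*}·K = 0. Setting Σ_{Y1} = Σ_{X*}, Σ_{Y2} = Σ_{X*} + Σ_W̃, Σ_{Y3} = Σ_{X*} + Σ_W, we have Σ_{Y1} − Σ_{Y2}·Σ_{Y3}⁻¹·Σ_{Y1} = 0 and Σ_{Y1} − Σ_{Y1}·Σ_{Y3}⁻¹·Σ_{Y2} = 0. -/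
open Matrix

theorem stmt_6 (n : ℕ) (SXs SWt SW K : Matrix (Fin n) (Fin n) ℝ)
    (hXs : SXs.IsSymm) (hWt : SWt.IsSymm) (hW : SW.IsSymm)
    (h1 : (SXs + SWt).PosDef) (h2 : (SXs + SW).PosDef)
    (hinv : (SXs + SWt)⁻¹ = (SXs + SW)⁻¹ + K)
    (hKX : K * SXs = 0) (hXK : SXs * K = 0) :
    SXs - (SXs + SWt) * (SXs + SW)⁻¹ * SXs = 0 ∧
    SXs - SXs * (SXs + SW)⁻¹ * (SXs + SWt) = 0 := by
  have hu1 : IsUnit (SXs + SWt).det := h1.det_pos.ne'.isUnit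
  have hu2 : IsUnit (SXs + SW).det := h2.det_pos.ne'.isUnit
  have key : (SXs + SWt)⁻¹ * SXs = (SXs + SW)⁻¹ * SXs := by
    rw [hinv, add_mul, hKX, add_zero]
  have key2 : SXs * (SXs + SWt)⁻¹ = SXs * (SXs + SW)⁻¹ := by
    rw [hinv, mul_add, hXK, add_zero]
  constructor
  · have : (SXs + SWt) * ((SXs + SW)⁻¹ * SXs) = SXs := by
      rw [← key, ← mul_assoc, Matrix.mul_nonsing_inv _ hu1, one_mul]
    rw [mul_assoc, this, sub_self]
  · have : (SXs * (SXs + SW)⁻¹) * (SXs + SWt) = SXs := by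
      rw [← key2, mul_assoc, Matrix.nonsing_inv_mul _ hu1, mul_one]
    rw [this, sub_self]
end

section
/- Let Σ_X be positive definite n×n and Σ_W positive definite n×n, and μ > 1. Let Q be non-singular with Qᵀ·Σ_X·Q = I and Qᵀ·Σ_W·Q = D_W diagonal with entries d_i > 0. Define the diagonal matrix D_L with entries d_{L,i} = 0 if d_i ≤ μ−1 and d_{L,i} = (d_i − (μ−1))/(μ·(1 + d_i)) if d_i > μ−1, and set L = Q·D_L·Qᵀ. Then L is positive semidefinite and (Σ_X + Σ_W)⁻¹ + L ⪰ μ⁻¹·Σ_X⁻¹. -/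
open Matrix

theorem stmt_10 (n : ℕ) (SX SW Q : Matrix (Fin n) (Fin n) ℝ) (d : Fin n → ℝ)
    (hX : SX.PosDef) (hW : SW.PosDef) (μ : ℝ) (hμ : 1 < μ)
    (hQ : IsUnit Q.det) (hQX : Qᵀ * SX * Q = 1)
    (hQW : Qᵀ * SW * Q = Matrix.diagonal d) (hd : ∀ i, 0 < d i)
    (dL : Fin n → ℝ)
    (hdL : ∀ i, dL i = if d i ≤ μ - 1 then 0 else (d i - (μ - 1)) / (μ * (1 + d i))) :
    (Q * Matrix.diagonal dL * Qᵀ).PosSemidef ∧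
      ((SX + SW)⁻¹ + Q * Matrix.diagonal dL * Qᵀ - μ⁻¹ • SX⁻¹).PosSemidef := by
  have hμ0 : (0:ℝ) < μ := lt_trans one_pos hμ
  haveI : Invertible Q := Q.invertibleOfIsUnitDet hQ
  have hdL0 : ∀ i, 0 ≤ dL i := by
    intro i
    rw [hdL i]
    split
    · exact le_refl 0
    · next h =>
      push_neg at h
      have h1 : 0 < 1 + d i := by linarith [hd i]
      exact div_nonneg (by linarith) (by positivity)
  have hQT : ∀ (v : Fin n → ℝ), (0 ≤ v) → (Q * Matrix.diagonal v * Qᵀ).PosSemidef := by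
    intro v hv
    have := (Matrix.posSemidef_diagonal_iff.mpr fun i => hv i).mul_mul_conjTranspose_same Q
    simpa using this
  refine ⟨hQT dL hdL0, ?_⟩
  -- SX⁻¹ = Q * Qᵀ
  have hSXQ : SX * Q = Qᵀ⁻¹ := by
    have := congrArg (fun M => Qᵀ⁻¹ * M) hQX
    simpa [Matrix.mul_assoc, Matrix.inv_mul_cancel_left_of_invertible] using this
  have hSXinv : SX⁻¹ = Q * Qᵀ := by
    apply Matrix.inv_eq_right_inv
    rw [← Matrix.mul_assoc, hSXQ, Matrix.inv_mul_of_invertible]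
  -- (SX+SW)⁻¹
  set e : Fin n → ℝ := fun i => (1 + d i)⁻¹ with he
  have h1d : ∀ i, (0:ℝ) < 1 + d i := fun i => by linarith [hd i]
  have hSsum : Qᵀ * (SX + SW) * Q = Matrix.diagonal (fun i => 1 + d i) := by
    rw [Matrix.mul_add, Matrix.add_mul, hQX, hQW]
    ext i j
    by_cases h : i = j <;> simp [Matrix.diagonal, Matrix.one_apply, h]
  have hSQ : (SX + SW) * Q = Qᵀ⁻¹ * Matrix.diagonal (fun i => 1 + d i) := by
    have := congrArg (fun M => Qᵀ⁻¹ * M) hSsum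
    simpa [Matrix.mul_assoc, Matrix.inv_mul_cancel_left_of_invertible] using this
  have hSinv : (SX + SW)⁻¹ = Q * Matrix.diagonal e * Qᵀ := by
    apply Matrix.inv_eq_right_inv
    rw [← Matrix.mul_assoc, ← Matrix.mul_assoc, hSQ, Matrix.mul_assoc Qᵀ⁻¹,
      Matrix.diagonal_mul_diagonal]
    have : (fun i => (1 + d i) * e i) = fun _ => (1:ℝ) := by
      funext i; exact mul_inv_cancel₀ (ne_of_gt (h1d i))
    rw [this, Matrix.diagonal_one, Matrix.mul_one, Matrix.inv_mul_of_invertible]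
  -- rewrite the whole thing as Q * diagonal c * Qᵀ
  have key : (SX + SW)⁻¹ + Q * Matrix.diagonal dL * Qᵀ - μ⁻¹ • SX⁻¹
      = Q * Matrix.diagonal (fun i => e i + dL i - μ⁻¹) * Qᵀ := by
    rw [hSinv, hSXinv]
    have hdiag : Matrix.diagonal (fun i => e i + dL i - μ⁻¹)
        = Matrix.diagonal e + Matrix.diagonal dL - μ⁻¹ • (1 : Matrix (Fin n) (Fin n) ℝ) := by
      ext i j
      by_cases h : i = j <;> simp [Matrix.diagonal, Matrix.one_apply, h]
    rw [hdiag]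
    rw [Matrix.mul_sub, Matrix.mul_add, Matrix.sub_mul, Matrix.add_mul]
    simp [Matrix.mul_smul, Matrix.smul_mul]
  rw [key]
  apply hQT
  intro i
  simp only [Pi.zero_apply]
  rw [hdL i]
  split
  · next h =>
    have h2 : 1 + d i ≤ μ := by linarith
    have := inv_anti₀ (h1d i) h2
    simp only [he]
    linarith
  · next h =>
    push_neg at h
    have h1 : (1 + d i) ≠ 0 := ne_of_gt (h1d i)
    have h2 : μ ≠ 0 := ne_of_gt hμ0
    have : e i + (d i - (μ - 1)) / (μ * (1 + d i)) - μ⁻¹ = 0 := by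
      simp only [he]
      field_simp
      ring
    linarith
end

section
/- With the notation of the previous construction (Σ_X ≻ 0, Σ_W ≻ 0, Q with QᵀΣ_X Q = I, QᵀΣ_W Q = D_W, L = Q·D_L·Qᵀ as defined with d_{L,i} = 0 if d_i ≤ μ−1 and (d_i−(μ−1))/(μ(1+d_i)) otherwise), define Σ_W̃ = ((Σ_X + Σ_W)⁻¹ + L)⁻¹ − Σ_X and Σ_{X'} = Σ_X − (μ−1)⁻¹·Σ_W̃. Then Σ_{X'}·L = L·Σ_{X'} = 0. -/
open Matrix

theorem stmt_11 (n : ℕ) (SX SW Q : Matrix (Fin n) (Fin n) ℝ) (d : Fin n → ℝ)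
    (hX : SX.PosDef) (hW : SW.PosDef) (μ : ℝ) (hμ : 1 < μ)
    (hQ : IsUnit Q.det) (hQX : Qᵀ * SX * Q = 1)
    (hQW : Qᵀ * SW * Q = Matrix.diagonal d) (hd : ∀ i, 0 < d i)
    (dL : Fin n → ℝ)
    (hdL : ∀ i, dL i = if d i ≤ μ - 1 then 0 else (d i - (μ - 1)) / (μ * (1 + d i)))
    (L SWt SX' : Matrix (Fin n) (Fin n) ℝ)
    (hL : L = Q * Matrix.diagonal dL * Qᵀ)
    (hSWt : SWt = ((SX + SW)⁻¹ + L)⁻¹ - SX)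
    (hSX' : SX' = SX - (μ - 1)⁻¹ • SWt) :
    SX' * L = 0 ∧ L * SX' = 0 := by
  have hμ0 : μ ≠ 0 := by linarith
  have hμ1 : μ - 1 ≠ 0 := by linarith
  have hd1 : ∀ i, (1 + d i) ≠ 0 := fun i => by have := hd i; positivity
  haveI hQ' : Invertible Q := Q.invertibleOfIsUnitDet hQ
  haveI hQT : Invertible Qᵀ := Qᵀ.invertibleOfIsUnitDet (by rwa [det_transpose])
  set m : Fin n → ℝ := fun i => (1 + d i)⁻¹ + dL i with hm
  -- scalar facts
  have hmμ : ∀ i, ¬ d i ≤ μ - 1 → m i = μ⁻¹ := by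
    intro i hi
    simp only [hm, hdL i, if_neg hi]
    have h3 : μ * (1 + d i) ≠ 0 := mul_ne_zero hμ0 (hd1 i)
    have h4 : d i * μ + μ ≠ 0 := by intro h; exact h3 (by linarith)
    field_simp [hd1 i]
    ring
  have hmne : ∀ i, m i ≠ 0 := by
    intro i
    have h1 : 0 < (1 + d i)⁻¹ := by have := hd i; positivity
    have h2 : 0 ≤ dL i := by
      rw [hdL i]
      split_ifs with hi
      · exact le_refl 0
      · have h3 : 0 < d i - (μ - 1) := by linarith [not_le.mp hi]
        have h4 : 0 < μ * (1 + d i) := by have := hd i; positivity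
        exact le_of_lt (div_pos h3 h4)
    have : 0 < m i := by simp only [hm]; linarith
    exact ne_of_gt this
  set c : Fin n → ℝ := fun i => 1 - (μ - 1)⁻¹ * ((m i)⁻¹ - 1) with hc
  have hcdL : ∀ i, c i * dL i = 0 := by
    intro i
    by_cases hi : d i ≤ μ - 1
    · simp [hdL i, hi]
    · have : c i = 0 := by
        simp only [hc, hmμ i hi, inv_inv]
        field_simp
        ring
      simp [this]
  -- matrix computations
  have hSX : SX = (Qᵀ)⁻¹ * Q⁻¹ := by
    have : (Qᵀ)⁻¹ * (Qᵀ * SX * Q) * Q⁻¹ = SX := by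
      simp [Matrix.mul_assoc, Matrix.mul_nonsing_inv_cancel_left,
        Matrix.nonsing_inv_mul_cancel_left, Matrix.mul_nonsing_inv,
        Matrix.nonsing_inv_mul, hQ, isUnit_nonsing_inv_det_iff,
        Matrix.inv_mul_of_invertible, Matrix.mul_inv_of_invertible]
    rw [← this, hQX, Matrix.mul_one]
  have hSW : SW = (Qᵀ)⁻¹ * Matrix.diagonal d * Q⁻¹ := by
    have : (Qᵀ)⁻¹ * (Qᵀ * SW * Q) * Q⁻¹ = SW := by
      simp [Matrix.mul_assoc, Matrix.inv_mul_of_invertible, Matrix.mul_inv_of_invertible]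
    rw [← this, hQW, Matrix.mul_assoc]
  have hsum : SX + SW = (Qᵀ)⁻¹ * Matrix.diagonal (fun i => 1 + d i) * Q⁻¹ := by
    rw [hSX, hSW]
    have : Matrix.diagonal (fun i => 1 + d i)
        = (1 : Matrix (Fin n) (Fin n) ℝ) + Matrix.diagonal d := by
      rw [← Matrix.diagonal_one, Matrix.diagonal_add]
    rw [this, Matrix.mul_add, Matrix.add_mul, Matrix.mul_one]
  have hdiag_inv : ∀ (v : Fin n → ℝ), (∀ i, v i ≠ 0) → (Matrix.diagonal v)⁻¹
      = Matrix.diagonal (fun i => (v i)⁻¹) := by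
    intro v hv
    apply Matrix.inv_eq_right_inv
    rw [Matrix.diagonal_mul_diagonal]
    have : (fun i => v i * (v i)⁻¹) = fun _ => (1 : ℝ) := by
      funext i; exact mul_inv_cancel₀ (hv i)
    rw [this, Matrix.diagonal_one]
  have hconj_inv : ∀ (v : Fin n → ℝ), (∀ i, v i ≠ 0) →
      ((Qᵀ)⁻¹ * Matrix.diagonal v * Q⁻¹)⁻¹
        = Q * Matrix.diagonal (fun i => (v i)⁻¹) * Qᵀ := by
    intro v hv
    rw [Matrix.mul_inv_rev, Matrix.mul_inv_rev, hdiag_inv v hv,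
      Matrix.inv_inv_of_invertible, Matrix.inv_inv_of_invertible, Matrix.mul_assoc]
  have hconj_inv2 : ∀ (v : Fin n → ℝ), (∀ i, v i ≠ 0) →
      (Q * Matrix.diagonal v * Qᵀ)⁻¹
        = (Qᵀ)⁻¹ * Matrix.diagonal (fun i => (v i)⁻¹) * Q⁻¹ := by
    intro v hv
    rw [Matrix.mul_inv_rev, Matrix.mul_inv_rev, hdiag_inv v hv, Matrix.mul_assoc]
  have hstep : (SX + SW)⁻¹ + L = Q * Matrix.diagonal m * Qᵀ := by
    rw [hsum, hconj_inv _ hd1, hL, hm]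
    rw [← Matrix.add_mul, ← Matrix.mul_add, ← Matrix.diagonal_add]
  have hSWt' : SWt = (Qᵀ)⁻¹ * Matrix.diagonal (fun i => (m i)⁻¹ - 1) * Q⁻¹ := by
    rw [hSWt, hstep, hconj_inv2 _ hmne, hSX]
    have : Matrix.diagonal (fun i => (m i)⁻¹ - 1)
        = Matrix.diagonal (fun i => (m i)⁻¹) - 1 := by
      rw [← Matrix.diagonal_one, Matrix.diagonal_sub]
    rw [this, Matrix.mul_sub, Matrix.sub_mul, Matrix.mul_one]
  have hSX'' : SX' = (Qᵀ)⁻¹ * Matrix.diagonal c * Q⁻¹ := by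
    rw [hSX', hSWt', hSX]
    have h1 : (μ - 1)⁻¹ • ((Qᵀ)⁻¹ * Matrix.diagonal (fun i => (m i)⁻¹ - 1) * Q⁻¹)
        = (Qᵀ)⁻¹ * Matrix.diagonal (fun i => (μ - 1)⁻¹ * ((m i)⁻¹ - 1)) * Q⁻¹ := by
      have hfun : (μ - 1)⁻¹ • (fun i => (m i)⁻¹ - 1)
          = fun i => (μ - 1)⁻¹ * ((m i)⁻¹ - 1) := by
        funext i; simp
      rw [← Matrix.smul_mul, ← Matrix.mul_smul, ← Matrix.diagonal_smul, hfun]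
    rw [h1]
    have h2 : Matrix.diagonal c
        = 1 - Matrix.diagonal (fun i => (μ - 1)⁻¹ * ((m i)⁻¹ - 1)) := by
      rw [← Matrix.diagonal_one, ← Matrix.diagonal_sub]
    rw [h2, Matrix.mul_sub, Matrix.sub_mul, Matrix.mul_one]
  constructor
  · rw [hSX'', hL]
    calc (Qᵀ)⁻¹ * Matrix.diagonal c * Q⁻¹ * (Q * Matrix.diagonal dL * Qᵀ)
        = (Qᵀ)⁻¹ * (Matrix.diagonal c * ((Q⁻¹ * Q) * (Matrix.diagonal dL * Qᵀ))) := by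
          simp only [Matrix.mul_assoc]
      _ = (Qᵀ)⁻¹ * (Matrix.diagonal c * Matrix.diagonal dL) * Qᵀ := by
          rw [Matrix.nonsing_inv_mul Q hQ, Matrix.one_mul]
          simp only [Matrix.mul_assoc]
      _ = 0 := by
          rw [Matrix.diagonal_mul_diagonal]
          have : (fun i => c i * dL i) = fun _ => (0 : ℝ) := funext hcdL
          simp [this]
  · rw [hSX'', hL]
    calc Q * Matrix.diagonal dL * Qᵀ * ((Qᵀ)⁻¹ * Matrix.diagonal c * Q⁻¹)
        = Q * (Matrix.diagonal dL * ((Qᵀ * (Qᵀ)⁻¹) * (Matrix.diagonal c * Q⁻¹))) := by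
          simp only [Matrix.mul_assoc]
      _ = Q * (Matrix.diagonal dL * Matrix.diagonal c) * Q⁻¹ := by
          rw [Matrix.mul_inv_of_invertible, Matrix.one_mul]
          simp only [Matrix.mul_assoc]
      _ = 0 := by
          rw [Matrix.diagonal_mul_diagonal]
          have : (fun i => dL i * c i) = fun _ => (0 : ℝ) := by
            funext i; rw [mul_comm]; exact hcdL i
          simp [this]
end

section
/- Let Σ_W ≻ 0 and Σ_Ṽ ≻ 0 be n×n matrices and μ > 1. Let Q be non-singular with Qᵀ·Σ_W·Q = D_W diagonal (entries d_i > 0) and Qᵀ·Σ_Ṽ·Q = I. Define diagonal D_K with d_{K,i} = 0 if d_i ≤ (μ−1)⁻¹ and d_{K,i} = (μ−1) − 1/d_i otherwise, and K = Q·D_K·Qᵀ. Then K ⪰ 0, Σ_W⁻¹ + K ⪰ (μ−1)·Σ_Ṽ⁻¹, and with Σ_W̃ = (Σ_W⁻¹ + K)⁻¹ and Σ_{X*} = (μ−1)⁻¹Σ_Ṽ − Σ_W̃ one has K·Σ_{X*} = Σ_{X*}·K = 0. -/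
open Matrix

theorem stmt_12 (n : ℕ) (SW SV Q : Matrix (Fin n) (Fin n) ℝ) (d : Fin n → ℝ)
    (hW : SW.PosDef) (hV : SV.PosDef) (μ : ℝ) (hμ : 1 < μ)
    (hQ : IsUnit Q.det) (hQW : Qᵀ * SW * Q = Matrix.diagonal d)
    (hQV : Qᵀ * SV * Q = 1) (hd : ∀ i, 0 < d i)
    (dK : Fin n → ℝ)
    (hdK : ∀ i, dK i = if d i ≤ (μ - 1)⁻¹ then 0 else (μ - 1) - 1 / d i)
    (K SWt SXs : Matrix (Fin n) (Fin n) ℝ)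
    (hK : K = Q * Matrix.diagonal dK * Qᵀ)
    (hSWt : SWt = (SW⁻¹ + K)⁻¹)
    (hSXs : SXs = (μ - 1)⁻¹ • SV - SWt) :
    K.PosSemidef ∧ (SW⁻¹ + K - (μ - 1) • SV⁻¹).PosSemidef ∧
      K * SXs = 0 ∧ SXs * K = 0 := by
  have he : (0:ℝ) < μ - 1 := by linarith
  haveI : Invertible Q := Q.invertibleOfIsUnitDet hQ
  haveI : Invertible Qᵀ := Q.invertibleTranspose
  -- basic scalar facts
  have hdK0 : ∀ i, 0 ≤ dK i := by
    intro i
    rw [hdK i]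
    split_ifs with h
    · exact le_refl 0
    · push_neg at h
      have h1 : (d i)⁻¹ < μ - 1 := by
        rw [inv_lt_comm₀ (hd i) he]
        exact h
      rw [one_div]
      linarith
  set f : Fin n → ℝ := fun i => (d i)⁻¹ + dK i with hf_def
  have hf_pos : ∀ i, 0 < f i := fun i => add_pos_of_pos_of_nonneg (inv_pos.mpr (hd i)) (hdK0 i)
  have hf_ge : ∀ i, μ - 1 ≤ f i := by
    intro i
    simp only [hf_def]
    rw [hdK i]
    split_ifs with h
    · have : μ - 1 ≤ (d i)⁻¹ := by
        rw [le_inv_comm₀ he (hd i)]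
        exact h
      linarith
    · rw [one_div]; linarith
  have hdKg : ∀ i, dK i * ((μ - 1)⁻¹ - (f i)⁻¹) = 0 := by
    intro i
    rcases le_or_gt (d i) ((μ - 1)⁻¹) with h | h
    · rw [hdK i, if_pos h, zero_mul]
    · have hfi : f i = μ - 1 := by
        simp only [hf_def]
        rw [hdK i, if_neg (not_le.mpr h), one_div]
        ring
      rw [hfi, sub_self, mul_zero]
  -- matrix expressions
  have hSW : SW = Qᵀ⁻¹ * Matrix.diagonal d * Q⁻¹ := by
    rw [← hQW, Matrix.mul_assoc Qᵀ SW Q, Matrix.inv_mul_cancel_left_of_invertible,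
      Matrix.mul_inv_cancel_right_of_invertible]
  have hSV : SV = Qᵀ⁻¹ * Q⁻¹ := by
    have h1 : Qᵀ⁻¹ * (Qᵀ * SV * Q) * Q⁻¹ = Qᵀ⁻¹ * 1 * Q⁻¹ := by rw [hQV]
    rw [Matrix.mul_assoc Qᵀ SV Q, Matrix.inv_mul_cancel_left_of_invertible,
      Matrix.mul_inv_cancel_right_of_invertible, Matrix.mul_one] at h1
    exact h1
  have hdiag_inv : ∀ (v : Fin n → ℝ), (∀ i, v i ≠ 0) →
      (Matrix.diagonal v)⁻¹ = Matrix.diagonal (fun i => (v i)⁻¹) := by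
    intro v hv
    apply inv_eq_right_inv
    rw [diagonal_mul_diagonal]
    simp only [mul_inv_cancel₀ (hv _)]
    exact diagonal_one
  have hSWinv : SW⁻¹ = Q * Matrix.diagonal (fun i => (d i)⁻¹) * Qᵀ := by
    rw [hSW, Matrix.mul_inv_rev, Matrix.mul_inv_rev,
      Matrix.inv_inv_of_invertible, Matrix.inv_inv_of_invertible,
      hdiag_inv d (fun i => (hd i).ne'), Matrix.mul_assoc]
  have hSVinv : SV⁻¹ = Q * Qᵀ := by
    rw [hSV, Matrix.mul_inv_rev, Matrix.inv_inv_of_invertible, Matrix.inv_inv_of_invertible]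
  have hsum : SW⁻¹ + K = Q * Matrix.diagonal f * Qᵀ := by
    rw [hSWinv, hK, ← Matrix.add_mul, ← Matrix.mul_add, diagonal_add]
  have hSWt' : SWt = Qᵀ⁻¹ * Matrix.diagonal (fun i => (f i)⁻¹) * Q⁻¹ := by
    rw [hSWt, hsum, Matrix.mul_inv_rev, Matrix.mul_inv_rev,
      hdiag_inv f (fun i => (hf_pos i).ne'), Matrix.mul_assoc]
  have hSXs' : SXs = Qᵀ⁻¹ * Matrix.diagonal (fun i => (μ - 1)⁻¹ - (f i)⁻¹) * Q⁻¹ := by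
    rw [hSXs, hSWt', hSV]
    have hdiagsub : Matrix.diagonal (fun i => (μ - 1)⁻¹ - (f i)⁻¹)
        = (μ - 1)⁻¹ • (1 : Matrix (Fin n) (Fin n) ℝ)
          - Matrix.diagonal (fun i => (f i)⁻¹) := by
      ext i j
      by_cases h : i = j <;> simp [Matrix.diagonal_apply, Matrix.one_apply, h]
    rw [hdiagsub, Matrix.mul_sub, Matrix.sub_mul]
    congr 1
    rw [Matrix.mul_smul, Matrix.mul_one, Matrix.smul_mul]
  -- 1) K PosSemidef
  have hKpsd : K.PosSemidef := by
    rw [hK]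
    exact (posSemidef_diagonal_iff.mpr hdK0).mul_mul_conjTranspose_same Q
  have hzKS : (Matrix.diagonal fun i => dK i * ((μ - 1)⁻¹ - (f i)⁻¹))
      = (0 : Matrix (Fin n) (Fin n) ℝ) := by
    rw [show (fun i => dK i * ((μ - 1)⁻¹ - (f i)⁻¹)) = (fun _ => (0:ℝ)) from funext hdKg]
    exact diagonal_zero
  have hzSK : (Matrix.diagonal fun i => ((μ - 1)⁻¹ - (f i)⁻¹) * dK i)
      = (0 : Matrix (Fin n) (Fin n) ℝ) := by
    rw [show (fun i => ((μ - 1)⁻¹ - (f i)⁻¹) * dK i) = (fun _ => (0:ℝ)) from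
      funext (fun i => by rw [mul_comm]; exact hdKg i)]
    exact diagonal_zero
  refine ⟨hKpsd, ?_, ?_, ?_⟩
  -- 2) second PosSemidef
  · have hconst : (μ - 1) • SV⁻¹ = Q * Matrix.diagonal (fun _ => μ - 1) * Qᵀ := by
      rw [hSVinv,
        show Matrix.diagonal (fun _ : Fin n => μ - 1) = (μ - 1) • (1 : Matrix (Fin n) (Fin n) ℝ) by
          rw [smul_eq_diagonal_mul]; simp,
        Matrix.mul_smul, Matrix.mul_one, Matrix.smul_mul]
    have heq : SW⁻¹ + K - (μ - 1) • SV⁻¹ =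
        Q * Matrix.diagonal (fun i => f i - (μ - 1)) * Qᵀ := by
      rw [hsum, hconst, ← Matrix.sub_mul, ← Matrix.mul_sub]
      congr 2
      ext i j
      by_cases h : i = j <;> simp [Matrix.diagonal_apply, h]
    rw [heq]
    exact (posSemidef_diagonal_iff.mpr
      (fun i => sub_nonneg.mpr (hf_ge i))).mul_mul_conjTranspose_same Q
  -- 3) K * SXs = 0
  · rw [hK, hSXs']
    simp only [Matrix.mul_assoc]
    rw [Matrix.mul_inv_cancel_left_of_invertible, ← Matrix.mul_assoc (Matrix.diagonal dK),
      diagonal_mul_diagonal, hzKS]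
    simp
  -- 4) SXs * K = 0
  · rw [hK, hSXs']
    simp only [Matrix.mul_assoc]
    rw [Matrix.inv_mul_cancel_left_of_invertible,
      ← Matrix.mul_assoc (Matrix.diagonal fun i => (μ - 1)⁻¹ - (f i)⁻¹),
      diagonal_mul_diagonal, hzSK]
    simp
end
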